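/- arXiv:2505.04580 — 2 statements merged into one kernel-verified Lean document; each statement's English description precedes it below -/
import Mathlib

section
/- Let S be the 6×6 stochastic matrix S = (1/3)·[[1,0,0,1,0,1],[1,1,1,0,0,0],[0,0,1,0,1,1],[0,1,0,1,0,1],[1,0,0,1,1,0],[0,1,0,0,1,1]]. Then S is a scrambling matrix (hence its coefficient of ergodicity satisfies τ(S) < 1), but its metric consensus seminorm satisfies |S|_∞ = 1; in particular τ(S) < |S|_∞, so the metric consensus seminorm for p = ∞ is not equal to the coefficient of ergodicity. -/
open Matrix Finset
open scoped ENNReal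





noncomputable def matPNorm (p : ℝ≥0∞) [Fact (1 ≤ p)] {n m : ℕ}
    (M : Matrix (Fin n) (Fin m) ℝ) : ℝ :=
  ‖LinearMap.toContinuousLinearMap
    (Matrix.toLin (PiLp.basisFun p ℝ (Fin m)) (PiLp.basisFun p ℝ (Fin n)) M)‖

noncomputable def metricSN (p : ℝ≥0∞) [Fact (1 ≤ p)] {n m : ℕ}
    (M : Matrix (Fin n) (Fin m) ℝ) : ℝ :=
  ⨅ c : Fin m → ℝ, matPNorm p (M - Matrix.of fun _ j => c j)

noncomputable def vecSN (p : ℝ≥0∞) [Fact (1 ≤ p)] {m : ℕ} (x : Fin m → ℝ) : ℝ :=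
  ⨅ c : ℝ, ‖(WithLp.equiv p (Fin m → ℝ)).symm (x - fun _ => c)‖

noncomputable def inducedSN (p : ℝ≥0∞) [Fact (1 ≤ p)] {n m : ℕ}
    (M : Matrix (Fin n) (Fin m) ℝ) : ℝ :=
  sSup {r | ∃ x : Fin m → ℝ, vecSN p x = 1 ∧ r = vecSN p (M.mulVec x)}

noncomputable def coeErg {n : ℕ} (M : Matrix (Fin n) (Fin n) ℝ) : ℝ :=
  (1 / 2) * ⨆ i : Fin n, ⨆ j : Fin n, ∑ k, |M i k - M j k|

def IsStochastic {n : ℕ} (S : Matrix (Fin n) (Fin n) ℝ) : Prop :=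
  (∀ i j, 0 ≤ S i j) ∧ ∀ i, ∑ j, S i j = 1

def IsScrambling {n : ℕ} (S : Matrix (Fin n) (Fin n) ℝ) : Prop :=
  IsStochastic S ∧ ∀ i j, ∃ k, 0 < S i k ∧ 0 < S j k

def EqRowSum (n m : ℕ) : Submodule ℝ (Matrix (Fin n) (Fin m) ℝ) where
  carrier := {M | ∀ i i', ∑ j, M i j = ∑ j, M i' j}
  add_mem' := by
    intro A B hA hB i i'
    simp only [Matrix.add_apply, Finset.sum_add_distrib, hA i i', hB i i']
  zero_mem' := by intro i i'; simp
  smul_mem' := by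
    intro c A hA i i'
    simp only [Matrix.smul_apply, smul_eq_mul, ← Finset.mul_sum, hA i i']

noncomputable def prodSeq {n : ℕ} (M : ℕ → Matrix (Fin n) (Fin n) ℝ) :
    ℕ → Matrix (Fin n) (Fin n) ℝ
  | 0 => 1
  | (i + 1) => M i * prodSeq M i


lemma matPNorm_apply {n m : ℕ} (M : Matrix (Fin n) (Fin m) ℝ)
    (x : PiLp ⊤ fun _ : Fin m => ℝ) :
    (LinearMap.toContinuousLinearMap
      (Matrix.toLin (PiLp.basisFun ⊤ ℝ (Fin m)) (PiLp.basisFun ⊤ ℝ (Fin n)) M)) x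
      = (WithLp.equiv ⊤ _).symm (M.mulVec (WithLp.equiv ⊤ _ x)) := rfl

lemma matPNorm_nonneg {n m : ℕ} (M : Matrix (Fin n) (Fin m) ℝ) :
    0 ≤ matPNorm ⊤ M := norm_nonneg _

lemma matPNorm_le {n m : ℕ} [Nonempty (Fin m)] (M : Matrix (Fin n) (Fin m) ℝ) (C : ℝ)
    (hC : 0 ≤ C) (h : ∀ i, ∑ j, |M i j| ≤ C) : matPNorm ⊤ M ≤ C := by
  refine ContinuousLinearMap.opNorm_le_bound _ hC fun x => ?_
  rw [matPNorm_apply, WithLp.equiv_symm_apply, PiLp.norm_toLp]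
  rw [show ‖x‖ = ‖(WithLp.equiv ⊤ _) x‖ from (PiLp.norm_ofLp x).symm]
  set y := (WithLp.equiv ⊤ (Fin m → ℝ)) x with hy
  rw [Pi.norm_def] at *
  refine (pi_norm_le_iff_of_nonneg (by positivity)).2 fun i => ?_
  calc ‖M.mulVec y i‖ = |∑ j, M i j * y j| := by simp [Matrix.mulVec, dotProduct]
    _ ≤ ∑ j, |M i j * y j| := Finset.abs_sum_le_sum_abs _ _
    _ ≤ ∑ j, |M i j| * ‖y‖ := by
        refine Finset.sum_le_sum fun j _ => ?_
        rw [abs_mul]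
        exact mul_le_mul_of_nonneg_left (norm_le_pi_norm y j) (abs_nonneg _)
    _ = (∑ j, |M i j|) * ‖y‖ := by rw [Finset.sum_mul]
    _ ≤ C * ‖y‖ := mul_le_mul_of_nonneg_right (h i) (norm_nonneg _)

lemma rowSum_le_matPNorm {n m : ℕ} [Nonempty (Fin m)] (M : Matrix (Fin n) (Fin m) ℝ)
    (i0 : Fin n) : ∑ j, |M i0 j| ≤ matPNorm ⊤ M := by
  classical
  set x : Fin m → ℝ := fun j => if 0 ≤ M i0 j then 1 else -1 with hx
  have hxn : ‖(WithLp.equiv ⊤ (Fin m → ℝ)).symm x‖ = 1 := by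
    rw [WithLp.equiv_symm_apply, PiLp.norm_toLp, Pi.norm_def]
    have : ∀ j, ‖x j‖₊ = 1 := by
      intro j
      simp only [hx]
      split <;> simp
    simp only [this]
    simp [Finset.sup_const (Finset.univ_nonempty (α := Fin m))]
  have h1 : |(M.mulVec x) i0| = ∑ j, |M i0 j| := by
    have : (M.mulVec x) i0 = ∑ j, |M i0 j| := by
      simp only [Matrix.mulVec, dotProduct, hx]
      refine Finset.sum_congr rfl fun j _ => ?_
      rcases le_or_gt 0 (M i0 j) with h | h
      · simp [h, abs_of_nonneg h]
      · simp [not_le.2 h, abs_of_neg h]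
    rw [this, abs_of_nonneg (Finset.sum_nonneg fun j _ => abs_nonneg _)]
  have h2 := ContinuousLinearMap.le_opNorm
    (LinearMap.toContinuousLinearMap
      (Matrix.toLin (PiLp.basisFun ⊤ ℝ (Fin m)) (PiLp.basisFun ⊤ ℝ (Fin n)) M))
    ((WithLp.equiv ⊤ (Fin m → ℝ)).symm x)
  rw [matPNorm_apply, hxn, mul_one, Equiv.apply_symm_apply, WithLp.equiv_symm_apply, PiLp.norm_toLp] at h2
  calc ∑ j, |M i0 j| = |(M.mulVec x) i0| := h1.symm
    _ ≤ ‖M.mulVec x‖ := by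
        rw [Pi.norm_def]
        exact norm_le_pi_norm (M.mulVec x) i0
    _ ≤ matPNorm ⊤ M := h2


noncomputable def Amat : Matrix (Fin 6) (Fin 6) ℝ :=
  !![1, 0, 0, 1, 0, 1;
       1, 1, 1, 0, 0, 0;
       0, 0, 1, 0, 1, 1;
       0, 1, 0, 1, 0, 1;
       1, 0, 0, 1, 1, 0;
       0, 1, 0, 0, 1, 1]

lemma Ae00 : Amat 0 0 = 1 := rfl
lemma Ae01 : Amat 0 1 = 0 := rfl
lemma Ae02 : Amat 0 2 = 0 := rfl
lemma Ae03 : Amat 0 3 = 1 := rfl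
lemma Ae04 : Amat 0 4 = 0 := rfl
lemma Ae05 : Amat 0 5 = 1 := rfl
lemma Ae10 : Amat 1 0 = 1 := rfl
lemma Ae11 : Amat 1 1 = 1 := rfl
lemma Ae12 : Amat 1 2 = 1 := rfl
lemma Ae13 : Amat 1 3 = 0 := rfl
lemma Ae14 : Amat 1 4 = 0 := rfl
lemma Ae15 : Amat 1 5 = 0 := rfl
lemma Ae20 : Amat 2 0 = 0 := rfl
lemma Ae21 : Amat 2 1 = 0 := rfl
lemma Ae22 : Amat 2 2 = 1 := rfl
lemma Ae23 : Amat 2 3 = 0 := rfl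
lemma Ae24 : Amat 2 4 = 1 := rfl
lemma Ae25 : Amat 2 5 = 1 := rfl
lemma Ae30 : Amat 3 0 = 0 := rfl
lemma Ae31 : Amat 3 1 = 1 := rfl
lemma Ae32 : Amat 3 2 = 0 := rfl
lemma Ae33 : Amat 3 3 = 1 := rfl
lemma Ae34 : Amat 3 4 = 0 := rfl
lemma Ae35 : Amat 3 5 = 1 := rfl
lemma Ae40 : Amat 4 0 = 1 := rfl
lemma Ae41 : Amat 4 1 = 0 := rfl
lemma Ae42 : Amat 4 2 = 0 := rfl
lemma Ae43 : Amat 4 3 = 1 := rfl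
lemma Ae44 : Amat 4 4 = 1 := rfl
lemma Ae45 : Amat 4 5 = 0 := rfl
lemma Ae50 : Amat 5 0 = 0 := rfl
lemma Ae51 : Amat 5 1 = 1 := rfl
lemma Ae52 : Amat 5 2 = 0 := rfl
lemma Ae53 : Amat 5 3 = 0 := rfl
lemma Ae54 : Amat 5 4 = 1 := rfl
lemma Ae55 : Amat 5 5 = 1 := rfl

noncomputable def Smat : Matrix (Fin 6) (Fin 6) ℝ := (1 / 3 : ℝ) • Amat

lemma Ars0 : ∑ j, Amat 0 j = 3 := by rw [Fin.sum_univ_six]; norm_num [Ae00, Ae01, Ae02, Ae03, Ae04, Ae05]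
lemma Ars1 : ∑ j, Amat 1 j = 3 := by rw [Fin.sum_univ_six]; norm_num [Ae10, Ae11, Ae12, Ae13, Ae14, Ae15]
lemma Ars2 : ∑ j, Amat 2 j = 3 := by rw [Fin.sum_univ_six]; norm_num [Ae20, Ae21, Ae22, Ae23, Ae24, Ae25]
lemma Ars3 : ∑ j, Amat 3 j = 3 := by rw [Fin.sum_univ_six]; norm_num [Ae30, Ae31, Ae32, Ae33, Ae34, Ae35]
lemma Ars4 : ∑ j, Amat 4 j = 3 := by rw [Fin.sum_univ_six]; norm_num [Ae40, Ae41, Ae42, Ae43, Ae44, Ae45]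
lemma Ars5 : ∑ j, Amat 5 j = 3 := by rw [Fin.sum_univ_six]; norm_num [Ae50, Ae51, Ae52, Ae53, Ae54, Ae55]

lemma Amat_rowsum : ∀ i, ∑ j, Amat i j = 3 := by
  intro i; fin_cases i
  exacts [Ars0, Ars1, Ars2, Ars3, Ars4, Ars5]

lemma Amat_01 : ∀ i j, Amat i j = 0 ∨ Amat i j = 1 := by
  intro i j
  fin_cases i <;> fin_cases j <;> first | exact Or.inl rfl | exact Or.inr rfl

lemma Amat_scr : ∀ i j, ∃ k, Amat i k = 1 ∧ Amat j k = 1 := by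
  intro i j
  fin_cases i <;> fin_cases j <;>
    first
    | exact ⟨0, rfl, rfl⟩
    | exact ⟨1, rfl, rfl⟩
    | exact ⟨2, rfl, rfl⟩
    | exact ⟨3, rfl, rfl⟩
    | exact ⟨4, rfl, rfl⟩
    | exact ⟨5, rfl, rfl⟩

lemma Smat_apply (i j : Fin 6) : Smat i j = 1 / 3 * Amat i j := rfl

lemma Smat_nonneg : ∀ i j, 0 ≤ Smat i j := by
  intro i j
  rw [Smat_apply]
  rcases Amat_01 i j with h | h <;> rw [h] <;> norm_num

lemma Smat_rowsum : ∀ i, ∑ j, Smat i j = 1 := by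
  intro i
  simp only [Smat_apply, ← Finset.mul_sum, Amat_rowsum i]
  norm_num

lemma Smat_scr : ∀ i j, ∃ k, Smat i k = 1 / 3 ∧ Smat j k = 1 / 3 := by
  intro i j
  obtain ⟨k, h1, h2⟩ := Amat_scr i j
  exact ⟨k, by rw [Smat_apply, h1]; norm_num, by rw [Smat_apply, h2]; norm_num⟩

lemma Smat_pair (i j : Fin 6) : ∑ k, |Smat i k - Smat j k| ≤ 4 / 3 := by
  obtain ⟨k0, h1, h2⟩ := Smat_scr i j
  have e1 : ∑ k, |Smat i k - Smat j k|
      = |Smat i k0 - Smat j k0| + ∑ k ∈ Finset.univ.erase k0, |Smat i k - Smat j k| :=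
    (Finset.add_sum_erase _ _ (Finset.mem_univ k0)).symm
  have e2 : |Smat i k0 - Smat j k0| = 0 := by rw [h1, h2]; simp
  have e3 : ∑ k ∈ Finset.univ.erase k0, |Smat i k - Smat j k|
      ≤ ∑ k ∈ Finset.univ.erase k0, (Smat i k + Smat j k) := by
    refine Finset.sum_le_sum fun k _ => ?_
    calc |Smat i k - Smat j k| ≤ |Smat i k| + |Smat j k| := abs_sub _ _
      _ = Smat i k + Smat j k := by
          rw [abs_of_nonneg (Smat_nonneg i k), abs_of_nonneg (Smat_nonneg j k)]
  have e4 : ∑ k ∈ Finset.univ.erase k0, (Smat i k + Smat j k) = 4 / 3 := by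
    rw [Finset.sum_add_distrib, Finset.sum_erase_eq_sub (Finset.mem_univ k0),
      Finset.sum_erase_eq_sub (Finset.mem_univ k0), Smat_rowsum, Smat_rowsum, h1, h2]
    norm_num
  rw [e1, e2, zero_add]
  calc _ ≤ _ := e3
    _ = _ := e4

lemma coeErg_Smat_le : coeErg Smat ≤ 2 / 3 := by
  have hsup : (⨆ i : Fin 6, ⨆ j : Fin 6, ∑ k, |Smat i k - Smat j k|) ≤ 4 / 3 :=
    ciSup_le fun i => ciSup_le fun j => Smat_pair i j
  have : coeErg Smat = 1 / 2 * ⨆ i : Fin 6, ⨆ j : Fin 6, ∑ k, |Smat i k - Smat j k| := rfl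
  rw [this]; linarith

lemma habs : ∀ x : ℝ, 1 / 3 ≤ |1 / 3 - x| + |x| := by
  intro x
  have h := abs_add_le (1 / 3 - x) x
  have h2 : |(1:ℝ) / 3| = 1 / 3 := by norm_num
  simp only [sub_add_cancel] at h
  linarith [h, h2.ge, h2.le]

lemma vrow1 (c : Fin 6 → ℝ) : ∑ j, |Smat 1 j - c j| = |1 / 3 - c 0| + |1 / 3 - c 1| + |1 / 3 - c 2| + |c 3| + |c 4| + |c 5| := by
  rw [Fin.sum_univ_six]
  simp only [Smat_apply, Ae10, Ae11, Ae12, Ae13, Ae14, Ae15]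
  norm_num
lemma vrow2 (c : Fin 6 → ℝ) : ∑ j, |Smat 2 j - c j| = |c 0| + |c 1| + |1 / 3 - c 2| + |c 3| + |1 / 3 - c 4| + |1 / 3 - c 5| := by
  rw [Fin.sum_univ_six]
  simp only [Smat_apply, Ae20, Ae21, Ae22, Ae23, Ae24, Ae25]
  norm_num
lemma vrow3 (c : Fin 6 → ℝ) : ∑ j, |Smat 3 j - c j| = |c 0| + |1 / 3 - c 1| + |c 2| + |1 / 3 - c 3| + |c 4| + |1 / 3 - c 5| := by
  rw [Fin.sum_univ_six]
  simp only [Smat_apply, Ae30, Ae31, Ae32, Ae33, Ae34, Ae35]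
  norm_num
lemma vrow4 (c : Fin 6 → ℝ) : ∑ j, |Smat 4 j - c j| = |1 / 3 - c 0| + |c 1| + |c 2| + |1 / 3 - c 3| + |1 / 3 - c 4| + |c 5| := by
  rw [Fin.sum_univ_six]
  simp only [Smat_apply, Ae40, Ae41, Ae42, Ae43, Ae44, Ae45]
  norm_num

lemma key_lb (c : Fin 6 → ℝ) : ∃ i : Fin 6, 1 ≤ ∑ j, |Smat i j - c j| := by
  have h1 := vrow1 c
  have h2 := vrow2 c
  have h3 := vrow3 c
  have h4 := vrow4 c
  by_contra h
  push_neg at h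
  have b1 := h 1
  have b2 := h 2
  have b3 := h 3
  have b4 := h 4
  rw [h1] at b1; rw [h2] at b2; rw [h3] at b3; rw [h4] at b4
  linarith [habs (c 0), habs (c 1), habs (c 2), habs (c 3), habs (c 4), habs (c 5)]

lemma metricSN_Smat : metricSN ⊤ Smat = 1 := by
  have hbdd : BddBelow (Set.range fun c : Fin 6 → ℝ =>
      matPNorm ⊤ (Smat - Matrix.of fun _ j => c j)) := by
    refine ⟨0, ?_⟩
    rintro r ⟨c, rfl⟩
    exact matPNorm_nonneg _
  refine le_antisymm ?_ ?_
  · have h0 : metricSN ⊤ Smat ≤ matPNorm ⊤ (Smat - Matrix.of fun _ j => (fun _ : Fin 6 => (0:ℝ)) j) :=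
      ciInf_le hbdd (fun _ => (0:ℝ))
    have hz : (Smat - Matrix.of fun _ j => (fun _ : Fin 6 => (0:ℝ)) j) = Smat := by
      ext i j; simp
    rw [hz] at h0
    refine h0.trans (matPNorm_le _ 1 zero_le_one ?_)
    intro i
    have : ∀ j, |Smat i j| = Smat i j := fun j => abs_of_nonneg (Smat_nonneg i j)
    rw [Finset.sum_congr rfl fun j _ => this j, Smat_rowsum i]
  · refine le_ciInf fun c => ?_
    obtain ⟨i, hi⟩ := key_lb c
    set Mc : Matrix (Fin 6) (Fin 6) ℝ := Smat - Matrix.of fun _ j => c j with hMc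
    have he : ∑ j, |Mc i j| = ∑ j, |Smat i j - c j| := by
      refine Finset.sum_congr rfl fun j _ => ?_
      rw [hMc, Matrix.sub_apply, Matrix.of_apply]
    calc (1:ℝ) ≤ ∑ j, |Smat i j - c j| := hi
      _ = ∑ j, |Mc i j| := he.symm
      _ ≤ matPNorm ⊤ Mc := rowSum_le_matPNorm _ i

/-- The specific 6×6 stochastic matrix S below is scrambling (hence its
coefficient of ergodicity satisfies τ(S) < 1), yet its metric consensus seminorm
satisfies |S|_∞ = 1; in particular τ(S) < |S|_∞, so the metric consensus seminorm
for p = ∞ is not equal to the coefficient of ergodicity. -/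
theorem counterexample_metricSN_ne_coeErg :
    let S : Matrix (Fin 6) (Fin 6) ℝ :=
      (1 / 3 : ℝ) •
        !![1, 0, 0, 1, 0, 1;
           1, 1, 1, 0, 0, 0;
           0, 0, 1, 0, 1, 1;
           0, 1, 0, 1, 0, 1;
           1, 0, 0, 1, 1, 0;
           0, 1, 0, 0, 1, 1]
    IsScrambling S ∧ coeErg S < 1 ∧ metricSN ⊤ S = 1 ∧ coeErg S < metricSN ⊤ S := by
  intro S
  have hS : S = Smat := rfl
  rw [hS]
  have hsc : IsScrambling Smat := by
    refine ⟨⟨Smat_nonneg, Smat_rowsum⟩, fun i j => ?_⟩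
    obtain ⟨k, h1, h2⟩ := Smat_scr i j
    exact ⟨k, by rw [h1]; norm_num, by rw [h2]; norm_num⟩
  have h1 : coeErg Smat < 1 := lt_of_le_of_lt coeErg_Smat_le (by norm_num)
  have h2 : metricSN ⊤ Smat = 1 := metricSN_Smat
  exact ⟨hsc, h1, h2, by rw [h2]; exact h1⟩
end

section
/- The induced consensus seminorm is submultiplicative: for any n > 1, any p ∈ [1,∞], and any M₁, M₂ ∈ ℝ^{n×n} whose row sums are all equal, ⟨M₂M₁⟩_p ≤ ⟨M₂⟩_p · ⟨M₁⟩_p. -/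
open Matrix Finset
open scoped ENNReal

section AuxLemmas

variable {p : ℝ≥0∞} [Fact (1 ≤ p)] {m n : ℕ}

private lemma abs_apply_le_norm' (v : PiLp p (fun _ : Fin m => ℝ)) (i : Fin m) :
    |v i| ≤ ‖v‖ := by
  have h := (PiLp.lipschitzWith_ofLp p (fun _ : Fin m => ℝ)).norm_le_mul (by simp) v
  simp only [NNReal.coe_one, one_mul] at h
  calc |v i| ≤ ‖WithLp.equiv p _ v‖ := by
        simpa using norm_le_pi_norm (WithLp.equiv p _ v) i
    _ ≤ ‖v‖ := h

private lemma toLin_piLp_apply' (M : Matrix (Fin n) (Fin m) ℝ) (y : Fin m → ℝ) :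
    (Matrix.toLin (PiLp.basisFun p ℝ (Fin m)) (PiLp.basisFun p ℝ (Fin n)) M)
      ((WithLp.equiv p _).symm y) = (WithLp.equiv p _).symm (M.mulVec y) := by
  apply (PiLp.basisFun p ℝ (Fin n)).repr.injective
  ext i
  have hr : ⇑((PiLp.basisFun p ℝ (Fin m)).repr ((WithLp.equiv p (Fin m → ℝ)).symm y)) = y :=
    funext fun j => by simp [PiLp.basisFun_repr]
  simp only [WithLp.equiv_symm_apply] at hr
  simp [Matrix.toLin_apply, PiLp.basisFun_repr, Pi.single_apply, hr]

private lemma le_mul_ciInf' {f : ℝ → ℝ} {C r : ℝ} (hC : 0 ≤ C) (_hf : ∀ c, 0 ≤ f c)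
    (h : ∀ c, r ≤ C * f c) : r ≤ C * ⨅ c, f c := by
  rcases eq_or_lt_of_le hC with rfl | hC'
  · simpa using h 0
  · have h1 : r / C ≤ ⨅ c, f c :=
      le_ciInf fun c => (div_le_iff₀' hC').mpr (h c)
    calc r = C * (r / C) := by field_simp
      _ ≤ C * ⨅ c, f c := mul_le_mul_of_nonneg_left h1 hC

lemma vecSN_nonneg' (x : Fin m → ℝ) : 0 ≤ vecSN p x :=
  Real.iInf_nonneg fun _ => norm_nonneg _

lemma vecSN_le' (x : Fin m → ℝ) (c : ℝ) :
    vecSN p x ≤ ‖(WithLp.equiv p (Fin m → ℝ)).symm (x - fun _ => c)‖ :=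
  ciInf_le ⟨0, by rintro r ⟨c, rfl⟩; exact norm_nonneg _⟩ c

lemma vecSN_le_norm' (y : Fin m → ℝ) :
    vecSN p y ≤ ‖(WithLp.equiv p (Fin m → ℝ)).symm y‖ := by
  have h := vecSN_le' (p := p) y 0
  have hz : (y - fun _ : Fin m => (0 : ℝ)) = y := by funext i; simp
  rwa [hz] at h

private lemma vecSN_smul_le' (a : ℝ) (x : Fin m → ℝ) :
    vecSN p (a • x) ≤ |a| * vecSN p x := by
  refine le_mul_ciInf' (abs_nonneg a) (fun c => norm_nonneg _) fun c => ?_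
  have h1 : a • x - (fun _ : Fin m => a * c) = a • (x - fun _ => c) := by
    funext i; simp [mul_sub]
  calc vecSN p (a • x) ≤ ‖(WithLp.equiv p (Fin m → ℝ)).symm (a • x - fun _ => a * c)‖ :=
        vecSN_le' _ _
    _ = |a| * ‖(WithLp.equiv p (Fin m → ℝ)).symm (x - fun _ => c)‖ := by
        rw [h1]
        rw [show (WithLp.equiv p (Fin m → ℝ)).symm (a • (x - fun _ => c))
            = a • (WithLp.equiv p (Fin m → ℝ)).symm (x - fun _ => c) from rfl]
        rw [norm_smul, Real.norm_eq_abs]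

lemma vecSN_smul' (a : ℝ) (x : Fin m → ℝ) : vecSN p (a • x) = |a| * vecSN p x := by
  rcases eq_or_ne a 0 with rfl | ha
  · simp only [abs_zero, zero_mul, zero_smul]
    refine le_antisymm ?_ (vecSN_nonneg' _)
    have := vecSN_le_norm' (p := p) (0 : Fin m → ℝ)
    simpa using this
  · refine le_antisymm (vecSN_smul_le' a x) ?_
    have h := vecSN_smul_le' (p := p) a⁻¹ (a • x)
    rw [smul_smul, inv_mul_cancel₀ ha, one_smul, abs_inv] at h
    calc |a| * vecSN p x ≤ |a| * (|a|⁻¹ * vecSN p (a • x)) :=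
          mul_le_mul_of_nonneg_left h (abs_nonneg a)
      _ = vecSN p (a • x) := by
          rw [← mul_assoc, mul_inv_cancel₀ (abs_ne_zero.mpr ha), one_mul]

lemma vecSN_add_const' (x : Fin m → ℝ) (d : ℝ) : vecSN p (x + fun _ => d) = vecSN p x := by
  have key : ∀ (y : Fin m → ℝ) (e : ℝ), vecSN p (y + fun _ => e) ≤ vecSN p y := by
    intro y e
    refine le_ciInf fun c => ?_
    have h1 : (y + fun _ : Fin m => e) - (fun _ => c + e) = y - fun _ => c := by
      funext i; simp only [Pi.sub_apply, Pi.add_apply]; ring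
    calc vecSN p (y + fun _ => e)
        ≤ ‖(WithLp.equiv p (Fin m → ℝ)).symm ((y + fun _ => e) - fun _ => c + e)‖ :=
          vecSN_le' _ _
      _ = ‖(WithLp.equiv p (Fin m → ℝ)).symm (y - fun _ => c)‖ := by rw [h1]
  refine le_antisymm (key x d) ?_
  have h := key (x + fun _ => d) (-d)
  have h2 : (x + fun _ : Fin m => d) + (fun _ => -d) = x := by funext i; simp
  rwa [h2] at h

lemma vecSN_mulVec_le_matPNorm' (hn : 0 < n) (M : Matrix (Fin n) (Fin n) ℝ)
    (hM : ∀ i i', ∑ j, M i j = ∑ j, M i' j) (x : Fin n → ℝ) :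
    vecSN p (M.mulVec x) ≤ matPNorm p M * vecSN p x := by
  set T := LinearMap.toContinuousLinearMap
    (Matrix.toLin (PiLp.basisFun p ℝ (Fin n)) (PiLp.basisFun p ℝ (Fin n)) M) with hT
  have hTnorm : matPNorm p M = ‖T‖ := rfl
  rw [hTnorm]
  refine le_mul_ciInf' (norm_nonneg _) (fun c => norm_nonneg _) fun c => ?_
  set i0 : Fin n := ⟨0, hn⟩
  have hMx : M.mulVec (x - fun _ => c) = M.mulVec x + fun _ => -(c * ∑ j, M i0 j) := by
    funext i
    simp only [Matrix.mulVec, dotProduct, Pi.sub_apply, Pi.add_apply, mul_sub,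
      Finset.sum_sub_distrib]
    rw [show ∑ j, M i j * c = c * ∑ j, M i j by rw [Finset.mul_sum]; congr 1; funext; ring,
      hM i i0]
    ring
  have h1 : vecSN p (M.mulVec x) = vecSN p (M.mulVec (x - fun _ => c)) := by
    rw [hMx, vecSN_add_const']
  rw [h1]
  calc vecSN p (M.mulVec (x - fun _ => c))
      ≤ ‖(WithLp.equiv p (Fin n → ℝ)).symm (M.mulVec (x - fun _ => c))‖ := by
        exact vecSN_le_norm' _
    _ = ‖T ((WithLp.equiv p (Fin n → ℝ)).symm (x - fun _ => c))‖ := by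
        rw [hT]
        rw [show (LinearMap.toContinuousLinearMap
          (Matrix.toLin (PiLp.basisFun p ℝ (Fin n)) (PiLp.basisFun p ℝ (Fin n)) M))
              ((WithLp.equiv p (Fin n → ℝ)).symm (x - fun _ => c))
            = (Matrix.toLin (PiLp.basisFun p ℝ (Fin n)) (PiLp.basisFun p ℝ (Fin n)) M)
              ((WithLp.equiv p (Fin n → ℝ)).symm (x - fun _ => c)) from rfl]
        rw [toLin_piLp_apply']
    _ ≤ ‖T‖ * ‖(WithLp.equiv p (Fin n → ℝ)).symm (x - fun _ => c)‖ := T.le_opNorm _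

lemma inducedSN_set_bound' (hn : 0 < n) (M : Matrix (Fin n) (Fin n) ℝ)
    (hM : ∀ i i', ∑ j, M i j = ∑ j, M i' j) :
    ∀ r ∈ {r | ∃ x : Fin n → ℝ, vecSN p x = 1 ∧ r = vecSN p (M.mulVec x)},
      r ≤ matPNorm p M := by
  rintro r ⟨x, hx, rfl⟩
  calc vecSN p (M.mulVec x) ≤ matPNorm p M * vecSN p x :=
        vecSN_mulVec_le_matPNorm' hn M hM x
    _ = matPNorm p M := by rw [hx, mul_one]

lemma exists_vecSN_one' (hn : 1 < n) : ∃ x : Fin n → ℝ, vecSN p x = 1 := by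
  set e : Fin n → ℝ := Pi.single ⟨0, by omega⟩ 1 with he
  have hpos : (1 : ℝ) / 2 ≤ vecSN p e := by
    refine le_ciInf fun c => ?_
    set v := (WithLp.equiv p (Fin n → ℝ)).symm (e - fun _ => c) with hv
    have h0 : |1 - c| ≤ ‖v‖ := by
      have hc := abs_apply_le_norm' v ⟨0, by omega⟩
      simpa [hv, he, Pi.single_apply] using hc
    have h1 : |c| ≤ ‖v‖ := by
      have hc := abs_apply_le_norm' v ⟨1, hn⟩
      have hne : (⟨1, hn⟩ : Fin n) ≠ ⟨0, by omega⟩ := by simp [Fin.ext_iff]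
      simpa [hv, he, Pi.single_apply, hne, abs_sub_comm] using hc
    rcases le_or_gt c (1 / 2) with h | h
    · calc (1 : ℝ) / 2 ≤ 1 - c := by linarith
        _ ≤ |1 - c| := le_abs_self _
        _ ≤ ‖v‖ := h0
    · calc (1 : ℝ) / 2 ≤ c := by linarith
        _ ≤ |c| := le_abs_self _
        _ ≤ ‖v‖ := h1
  have hs : 0 < vecSN p e := lt_of_lt_of_le (by norm_num) hpos
  refine ⟨(vecSN p e)⁻¹ • e, ?_⟩
  rw [vecSN_smul', abs_inv, abs_of_pos hs, inv_mul_cancel₀ hs.ne']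

lemma inducedSN_nonneg' (hn : 1 < n) (M : Matrix (Fin n) (Fin n) ℝ)
    (hM : ∀ i i', ∑ j, M i j = ∑ j, M i' j) : 0 ≤ inducedSN p M := by
  obtain ⟨x, hx⟩ := exists_vecSN_one' (p := p) hn
  have hmem : vecSN p (M.mulVec x)
      ∈ {r | ∃ x : Fin n → ℝ, vecSN p x = 1 ∧ r = vecSN p (M.mulVec x)} := ⟨x, hx, rfl⟩
  exact le_trans (vecSN_nonneg' _)
    (le_csSup ⟨matPNorm p M, fun r hr => inducedSN_set_bound' (by omega) M hM r hr⟩ hmem)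

lemma vecSN_mulVec_le_inducedSN' (hn : 1 < n) (M : Matrix (Fin n) (Fin n) ℝ)
    (hM : ∀ i i', ∑ j, M i j = ∑ j, M i' j) (x : Fin n → ℝ) :
    vecSN p (M.mulVec x) ≤ inducedSN p M * vecSN p x := by
  rcases eq_or_lt_of_le (vecSN_nonneg' (p := p) x) with h0 | hpos
  · have h := vecSN_mulVec_le_matPNorm' (p := p) (by omega) M hM x
    rw [← h0, mul_zero] at h ⊢
    exact h
  · set s := vecSN p x with hs
    have hmem : vecSN p (M.mulVec (s⁻¹ • x))
        ∈ {r | ∃ x : Fin n → ℝ, vecSN p x = 1 ∧ r = vecSN p (M.mulVec x)} := by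
      refine ⟨s⁻¹ • x, ?_, rfl⟩
      rw [vecSN_smul', abs_inv, abs_of_pos hpos, ← hs, inv_mul_cancel₀ hpos.ne']
    have h1 : vecSN p (M.mulVec (s⁻¹ • x)) ≤ inducedSN p M :=
      le_csSup ⟨matPNorm p M, fun r hr => inducedSN_set_bound' (by omega) M hM r hr⟩ hmem
    rw [Matrix.mulVec_smul, vecSN_smul', abs_inv, abs_of_pos hpos] at h1
    calc vecSN p (M.mulVec x) = s * (s⁻¹ * vecSN p (M.mulVec x)) := by
          rw [← mul_assoc, mul_inv_cancel₀ hpos.ne', one_mul]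
      _ ≤ s * inducedSN p M := mul_le_mul_of_nonneg_left h1 hpos.le
      _ = inducedSN p M * s := mul_comm _ _

end AuxLemmas

/-- The induced consensus seminorm is submultiplicative: for any n > 1,
any p ∈ [1,∞], and any M₁, M₂ ∈ ℝ^{n×n} whose row sums are all equal,
⟨M₂M₁⟩_p ≤ ⟨M₂⟩_p · ⟨M₁⟩_p. -/
theorem inducedSN_submultiplicative (n : ℕ) (hn : 1 < n) (p : ℝ≥0∞) [Fact (1 ≤ p)]
    (M₁ M₂ : Matrix (Fin n) (Fin n) ℝ)
    (h₁ : ∀ i i', ∑ j, M₁ i j = ∑ j, M₁ i' j)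
    (h₂ : ∀ i i', ∑ j, M₂ i j = ∑ j, M₂ i' j) :
    inducedSN p (M₂ * M₁) ≤ inducedSN p M₂ * inducedSN p M₁ := by
  refine Real.sSup_le ?_ (mul_nonneg (inducedSN_nonneg' hn M₂ h₂) (inducedSN_nonneg' hn M₁ h₁))
  rintro r ⟨x, hx, rfl⟩
  rw [show (M₂ * M₁).mulVec x = M₂.mulVec (M₁.mulVec x) from (Matrix.mulVec_mulVec x M₂ M₁).symm]
  calc vecSN p (M₂.mulVec (M₁.mulVec x))
      ≤ inducedSN p M₂ * vecSN p (M₁.mulVec x) :=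
        vecSN_mulVec_le_inducedSN' hn M₂ h₂ _
    _ ≤ inducedSN p M₂ * (inducedSN p M₁ * vecSN p x) :=
        mul_le_mul_of_nonneg_left (vecSN_mulVec_le_inducedSN' hn M₁ h₁ x)
          (inducedSN_nonneg' hn M₂ h₂)
    _ = inducedSN p M₂ * inducedSN p M₁ := by rw [hx, mul_one]
end
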